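/- arXiv:1607.05001 — 7 statements merged into one kernel-verified Lean document; each statement's English description precedes it below -/
import Mathlib

section
/- Let A = (a_{cv}) be an m×n real matrix with nonnegative entries and no all-zero column, let x ∈ ℝ^n_{≥0} be a nonnegative signal, and let y = Ax. Then for every iteration ℓ ≥ 0 and every variable node v ∈ V, the IPA bounds satisfy 0 ≤ μ^{(ℓ)}_v ≤ x_v ≤ M^{(ℓ)}_v. -/
open scoped Classical
open Finset

variable {C V : Type*} [Fintype C] [Fintype V]

/-- The IPA lower/upper bounds `(μ^{(ℓ)}, M^{(ℓ)})` computed from measurement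
matrix `A` and measurement vector `y`. -/
noncomputable def ipa (A : C → V → ℝ) (y : C → ℝ) : ℕ → (V → ℝ) × (V → ℝ)
  | 0 => (fun _ => 0,
      fun v => sInf {r : ℝ | ∃ c, A c v ≠ 0 ∧ r = y c / A c v})
  | ℓ + 1 =>
      (fun v => sSup {r : ℝ | ∃ c, A c v ≠ 0 ∧
          r = max 0 ((y c - ∑ v' ∈ Finset.univ.filter (fun v' => v' ≠ v),
              A c v' * (ipa A y ℓ).2 v') / A c v)},
       fun v => sInf {r : ℝ | ∃ c, A c v ≠ 0 ∧
          r = (y c - ∑ v' ∈ Finset.univ.filter (fun v' => v' ≠ v),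
              A c v' * (ipa A y ℓ).1 v') / A c v})

/-- IPA lower bound `μ^{(ℓ)}_v`. -/
noncomputable def ipaMu (A : C → V → ℝ) (y : C → ℝ) (ℓ : ℕ) (v : V) : ℝ := (ipa A y ℓ).1 v

/-- IPA upper bound `M^{(ℓ)}_v`. -/
noncomputable def ipaM (A : C → V → ℝ) (y : C → ℝ) (ℓ : ℕ) (v : V) : ℝ := (ipa A y ℓ).2 v

/-- Neighbourhood `N(v)` of a variable node. -/
noncomputable def Nv (A : C → V → ℝ) (v : V) : Finset C := Finset.univ.filter fun c => A c v ≠ 0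

/-- Neighbourhood `N(c)` of a measurement node. -/
noncomputable def Nc (A : C → V → ℝ) (c : C) : Finset V := Finset.univ.filter fun v => A c v ≠ 0

/-- Neighbourhood `N(T)` of a set of variable nodes. -/
noncomputable def NT (A : C → V → ℝ) (T : Finset V) : Finset C :=
  Finset.univ.filter fun c => ∃ v ∈ T, A c v ≠ 0

/-- `N_T(c) = N(c) ∩ T`. -/
noncomputable def NTc (A : C → V → ℝ) (T : Finset V) (c : C) : Finset V :=
  T.filter fun v => A c v ≠ 0

/-- A stopping set: every neighbouring measurement node is connected at least twice to `T`. -/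
def StoppingSet (A : C → V → ℝ) (T : Finset V) : Prop :=
  ∀ c ∈ NT A T, 2 ≤ (NTc A T c).card

/-- The set `S` of variable nodes outside `T` connected only to `N(T)`. -/
noncomputable def Sset (A : C → V → ℝ) (T : Finset V) : Finset V :=
  Finset.univ.filter fun v => v ∉ T ∧ ∀ c, A c v ≠ 0 → c ∈ NT A T

/-- The termatiko condition on a set `T` of variable nodes. -/
def TermatikoCond (A : C → V → ℝ) (T : Finset V) : Prop :=
  ∀ c ∈ NT A T,
    (∃ v ∈ Sset A T, A c v ≠ 0) ∨
    2 ≤ ((NTc A T c).filter fun v => ∀ c', A c' v ≠ 0 → 2 ≤ (NTc A T c').card).card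

/-- Real-valued indicator vector `1_T` of a set of variable nodes. -/
noncomputable def indVec (T : Finset V) : V → ℝ := fun v => if v ∈ T then 1 else 0

/-- The measurement vector `A · 1_T`. -/
noncomputable def measT (A : C → V → ℝ) (T : Finset V) : C → ℝ :=
  fun c => ∑ v, A c v * indVec T v

/-- `T` is a termatiko set of `A`: the IPA run on `A · 1_T` keeps all lower bounds at zero. -/
def IsTermatiko (A : C → V → ℝ) (T : Finset V) : Prop :=
  ∀ (ℓ : ℕ) (v : V), ipaMu A (measT A T) ℓ v = 0

/-- `A` is a binary (0/1) matrix. -/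
def Binary (A : C → V → ℝ) : Prop := ∀ c v, A c v = 0 ∨ A c v = 1

/-- `A` has no all-zero column. -/
def NoZeroCol (A : C → V → ℝ) : Prop := ∀ v, ∃ c, A c v ≠ 0

/-- `A` has nonnegative entries. -/
def MatNonneg (A : C → V → ℝ) : Prop := ∀ c v, 0 ≤ A c v

/-- the IPA bounds always sandwich the true signal:
`0 ≤ μ^{(ℓ)}_v ≤ x_v ≤ M^{(ℓ)}_v`. -/
theorem ipa_bounds_sandwich {m n : ℕ} (A : Fin m → Fin n → ℝ)
    (hA : MatNonneg A) (hcol : NoZeroCol A)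
    (x : Fin n → ℝ) (hx : ∀ v, 0 ≤ x v)
    (y : Fin m → ℝ) (hy : ∀ c, y c = ∑ v, A c v * x v) :
    ∀ (ℓ : ℕ) (v : Fin n),
      0 ≤ ipaMu A y ℓ v ∧ ipaMu A y ℓ v ≤ x v ∧ x v ≤ ipaM A y ℓ v := by

  have hfin : ∀ (f : Fin m → ℝ) (v : Fin n),
      {r : ℝ | ∃ c, A c v ≠ 0 ∧ r = f c}.Finite := by
    intro f v
    apply Set.Finite.subset (Set.finite_range f)
    rintro r ⟨c, _, rfl⟩; exact ⟨c, rfl⟩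
  have hne : ∀ (f : Fin m → ℝ) (v : Fin n),
      {r : ℝ | ∃ c, A c v ≠ 0 ∧ r = f c}.Nonempty := by
    intro f v
    obtain ⟨c, hc⟩ := hcol v
    exact ⟨f c, c, hc, rfl⟩
  have hpos : ∀ c v, A c v ≠ 0 → 0 < A c v := fun c v h => (hA c v).lt_of_ne' h
  -- key: for c with A c v ≠ 0, y c decomposes
  have hdec : ∀ (c : Fin m) (v : Fin n),
      y c = A c v * x v + ∑ v' ∈ Finset.univ.filter (fun v' => v' ≠ v), A c v' * x v' := by
    intro c v
    rw [hy c, Finset.filter_ne', ← Finset.add_sum_erase _ _ (Finset.mem_univ v)]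
  intro ℓ
  induction ℓ with
  | zero =>
    intro v
    refine ⟨le_refl 0, hx v, ?_⟩
    show x v ≤ sInf _
    refine le_csInf (hne _ v) ?_
    rintro r ⟨c, hc, rfl⟩
    rw [le_div_iff₀ (hpos c v hc), mul_comm]
    rw [hdec c v]
    have : 0 ≤ ∑ v' ∈ Finset.univ.filter (fun v' => v' ≠ v), A c v' * x v' :=
      Finset.sum_nonneg fun v' _ => mul_nonneg (hA c v') (hx v')
    linarith
  | succ ℓ ih =>
    intro v
    have hM : ∀ v', x v' ≤ (ipa A y ℓ).2 v' := fun v' => (ih v').2.2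
    have hmu0 : ∀ v', 0 ≤ (ipa A y ℓ).1 v' := fun v' => (ih v').1
    have hmu : ∀ v', (ipa A y ℓ).1 v' ≤ x v' := fun v' => (ih v').2.1
    constructor
    · -- 0 ≤ μ^{ℓ+1} v : each element of the sup set is ≥ 0
      show (0:ℝ) ≤ sSup _
      obtain ⟨c, hc⟩ := hcol v
      refine le_csSup_of_le ((hfin _ v).bddAbove) ⟨c, hc, rfl⟩ (le_max_left _ _)
    constructor
    · -- μ^{ℓ+1} v ≤ x v
      show sSup _ ≤ x v
      refine csSup_le (hne _ v) ?_
      rintro r ⟨c, hc, rfl⟩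
      refine max_le (hx v) ?_
      rw [div_le_iff₀ (hpos c v hc), mul_comm]
      have hsum : ∑ v' ∈ Finset.univ.filter (fun v' => v' ≠ v), A c v' * x v' ≤
          ∑ v' ∈ Finset.univ.filter (fun v' => v' ≠ v), A c v' * (ipa A y ℓ).2 v' :=
        Finset.sum_le_sum fun v' _ => mul_le_mul_of_nonneg_left (hM v') (hA c v')
      have := hdec c v
      rw [Finset.filter_congr_decidable]
      linarith
    · -- x v ≤ M^{ℓ+1} v
      show x v ≤ sInf _
      refine le_csInf (hne _ v) ?_
      rintro r ⟨c, hc, rfl⟩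
      rw [le_div_iff₀ (hpos c v hc), mul_comm]
      have hsum : ∑ v' ∈ Finset.univ.filter (fun v' => v' ≠ v), A c v' * (ipa A y ℓ).1 v' ≤
          ∑ v' ∈ Finset.univ.filter (fun v' => v' ≠ v), A c v' * x v' :=
        Finset.sum_le_sum fun v' _ => mul_le_mul_of_nonneg_left (hmu v') (hA c v')
      have := hdec c v
      rw [Finset.filter_congr_decidable]
      linarith
end

section
/- Let A = (a_{cv}) be an m×n real matrix with nonnegative entries and no all-zero column, and let B ∈ {0,1}^{m×n} be its support pattern, i.e., b_{cv} = 1 iff a_{cv} ≠ 0. Let x ∈ ℝ^n_{≥0} and z ∈ {0,1}^n satisfy supp(z) = supp(x), and set y = Ax, s = Bz. Denote by μ^{(ℓ)}_v, M^{(ℓ)}_v the IPA bounds computed from (y, A) and by λ^{(ℓ)}_v, Λ^{(ℓ)}_v the IPA bounds computed from (s, B). Then for every ℓ ≥ 0: {v ∈ V : μ^{(ℓ)}_v = x_v} = {v ∈ V : λ^{(ℓ)}_v = z_v} and {v ∈ V : M^{(ℓ)}_v = x_v} = {v ∈ V : Λ^{(ℓ)}_v = z_v}. In particular, the IPA recovers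 position v of x if and only if it recovers position v of z, so only the positions of the nonzero entries of A and of x matter for recovery. -/
open scoped Classical
open Finset

variable {C V : Type*} [Fintype C] [Fintype V]

section Helpers

private lemma setFinite {C : Type*} [Fintype C] (p : C → Prop) (f : C → ℝ) :
    {r : ℝ | ∃ c, p c ∧ r = f c}.Finite :=
  (Set.finite_range f).subset (by rintro r ⟨c, _, rfl⟩; exact ⟨c, rfl⟩)

private lemma setNonempty {C : Type*} [Fintype C] {p : C → Prop} (f : C → ℝ)
    (hne : ∃ c, p c) : {r : ℝ | ∃ c, p c ∧ r = f c}.Nonempty :=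
  ⟨f hne.choose, hne.choose, hne.choose_spec, rfl⟩

private lemma csInf_le'' {C : Type*} [Fintype C] {p : C → Prop} (f : C → ℝ)
    {c : C} (hc : p c) : sInf {r : ℝ | ∃ c, p c ∧ r = f c} ≤ f c :=
  csInf_le (setFinite p f).bddBelow ⟨c, hc, rfl⟩

private lemma le_csSup'' {C : Type*} [Fintype C] {p : C → Prop} (f : C → ℝ)
    {c : C} (hc : p c) : f c ≤ sSup {r : ℝ | ∃ c, p c ∧ r = f c} :=
  le_csSup (setFinite p f).bddAbove ⟨c, hc, rfl⟩

private lemma sInf_eq_val {C : Type*} [Fintype C] {p : C → Prop} (f : C → ℝ)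
    (hne : ∃ c, p c) {t : ℝ} (hge : ∀ c, p c → t ≤ f c) :
    sInf {r : ℝ | ∃ c, p c ∧ r = f c} = t ↔ ∃ c, p c ∧ f c = t := by
  constructor
  · intro h
    obtain ⟨c, hc, hfc⟩ := (setNonempty f hne).csInf_mem (setFinite p f)
    exact ⟨c, hc, by rw [← hfc, h]⟩
  · rintro ⟨c, hc, hfc⟩
    refine le_antisymm (hfc ▸ csInf_le'' f hc) ?_
    exact le_csInf (setNonempty f hne) (by rintro r ⟨c', hc', rfl⟩; exact hge c' hc')

private lemma sSup_eq_val {C : Type*} [Fintype C] {p : C → Prop} (f : C → ℝ)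
    (hne : ∃ c, p c) {t : ℝ} (hle : ∀ c, p c → f c ≤ t) :
    sSup {r : ℝ | ∃ c, p c ∧ r = f c} = t ↔ ∃ c, p c ∧ f c = t := by
  constructor
  · intro h
    obtain ⟨c, hc, hfc⟩ := (setNonempty f hne).csSup_mem (setFinite p f)
    exact ⟨c, hc, by rw [← hfc, h]⟩
  · rintro ⟨c, hc, hfc⟩
    refine le_antisymm ?_ (hfc ▸ le_csSup'' f hc)
    exact csSup_le (setNonempty f hne) (by rintro r ⟨c', hc', rfl⟩; exact hle c' hc')

private lemma zero_le_sSup {C : Type*} [Fintype C] {p : C → Prop} {f : C → ℝ}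
    (hne : ∃ c, p c) (h : ∀ c, p c → 0 ≤ f c) :
    (0:ℝ) ≤ sSup {r : ℝ | ∃ c, p c ∧ r = f c} :=
  le_trans (h _ hne.choose_spec) (le_csSup'' f hne.choose_spec)

private lemma key_div {C V : Type*} [Fintype C] [Fintype V]
    (A : C → V → ℝ) (x : V → ℝ) (y : C → ℝ)
    (hy : ∀ c, y c = ∑ v, A c v * x v) (g : V → ℝ) (c : C) (v : V) (hc : A c v ≠ 0) :
    (y c - ∑ v' ∈ Finset.univ.filter (fun v' => v' ≠ v), A c v' * g v') / A c v
      = x v + (∑ v' ∈ Finset.univ.erase v, A c v' * (x v' - g v')) / A c v := by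
  have h1 : Finset.univ.filter (fun v' => v' ≠ v) = (Finset.univ : Finset V).erase v :=
    Finset.filter_ne' _ _
  have h2 : y c = A c v * x v + ∑ v' ∈ Finset.univ.erase v, A c v' * x v' := by
    rw [hy, ← Finset.add_sum_erase _ _ (Finset.mem_univ v)]
  have h3 : (∑ v' ∈ Finset.univ.erase v, A c v' * x v')
      - ∑ v' ∈ Finset.univ.erase v, A c v' * g v'
      = ∑ v' ∈ Finset.univ.erase v, A c v' * (x v' - g v') := by
    rw [← Finset.sum_sub_distrib]
    exact Finset.sum_congr rfl (fun _ _ => by ring)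
  rw [h1, h2, add_sub_assoc, h3, add_div, mul_div_cancel_left₀ _ hc]

private lemma sum_nn_zero_iff {V : Type*} {s : Finset V} {a q : V → ℝ}
    (ha : ∀ v ∈ s, 0 ≤ a v) (hq : ∀ v ∈ s, 0 ≤ q v) :
    ∑ v ∈ s, a v * q v = 0 ↔ ∀ v ∈ s, a v ≠ 0 → q v = 0 := by
  rw [Finset.sum_eq_zero_iff_of_nonneg (fun v hv => mul_nonneg (ha v hv) (hq v hv))]
  refine forall_congr' fun v => forall_congr' fun hv => ?_
  constructor
  · intro h hav
    rcases mul_eq_zero.mp h with h' | h'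
    · exact absurd h' hav
    · exact h'
  · intro h
    by_cases hav : a v = 0
    · rw [hav, zero_mul]
    · rw [h hav, mul_zero]

/-- Edge condition for the upper bound: the candidate value is `≥ x v`, with equality
iff all other neighbours have `g v' = x v'`. -/
private lemma M_edge {C V : Type*} [Fintype C] [Fintype V]
    (A : C → V → ℝ) (hA : MatNonneg A)
    (x : V → ℝ) (y : C → ℝ) (hy : ∀ c, y c = ∑ v, A c v * x v)
    (g : V → ℝ) (hg : ∀ v', g v' ≤ x v') (c : C) (v : V) (hc : A c v ≠ 0) :
    x v ≤ (y c - ∑ v' ∈ Finset.univ.filter (fun v' => v' ≠ v), A c v' * g v') / A c v ∧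
    ((y c - ∑ v' ∈ Finset.univ.filter (fun v' => v' ≠ v), A c v' * g v') / A c v = x v ↔
      ∀ v', v' ≠ v → A c v' ≠ 0 → g v' = x v') := by
  have hpos : 0 < A c v := lt_of_le_of_ne (hA c v) (Ne.symm hc)
  rw [key_div A x y hy g c v hc]
  have hS : 0 ≤ ∑ v' ∈ Finset.univ.erase v, A c v' * (x v' - g v') :=
    Finset.sum_nonneg fun v' _ => mul_nonneg (hA c v') (sub_nonneg.mpr (hg v'))
  constructor
  · exact le_add_of_nonneg_right (div_nonneg hS hpos.le)
  · rw [add_eq_left, div_eq_zero_iff, or_iff_left hc,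
      sum_nn_zero_iff (fun v' _ => hA c v') (fun v' _ => sub_nonneg.mpr (hg v'))]
    constructor
    · intro h v' hne hav
      have := h v' (Finset.mem_erase.mpr ⟨hne, Finset.mem_univ v'⟩) hav
      linarith [sub_eq_zero.mp this]
    · intro h v' hv' hav
      have hne := (Finset.mem_erase.mp hv').1
      rw [h v' hne hav]; ring

/-- Edge condition for the lower bound: the candidate value is `≤ x v`, and if `0 < x v`
it equals `x v` iff all other neighbours have `g v' = x v'`. -/
private lemma mu_edge {C V : Type*} [Fintype C] [Fintype V]
    (A : C → V → ℝ) (hA : MatNonneg A)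
    (x : V → ℝ) (hx : ∀ v, 0 ≤ x v) (y : C → ℝ) (hy : ∀ c, y c = ∑ v, A c v * x v)
    (g : V → ℝ) (hg : ∀ v', x v' ≤ g v') (c : C) (v : V) (hc : A c v ≠ 0) :
    max 0 ((y c - ∑ v' ∈ Finset.univ.filter (fun v' => v' ≠ v), A c v' * g v') / A c v)
      ≤ x v ∧
    (0 < x v →
      (max 0 ((y c - ∑ v' ∈ Finset.univ.filter (fun v' => v' ≠ v), A c v' * g v') / A c v)
        = x v ↔ ∀ v', v' ≠ v → A c v' ≠ 0 → g v' = x v')) := by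
  have hpos : 0 < A c v := lt_of_le_of_ne (hA c v) (Ne.symm hc)
  rw [key_div A x y hy g c v hc]
  have hS2 : 0 ≤ ∑ v' ∈ Finset.univ.erase v, A c v' * (g v' - x v') :=
    Finset.sum_nonneg fun v' _ => mul_nonneg (hA c v') (sub_nonneg.mpr (hg v'))
  have hSeq : ∑ v' ∈ Finset.univ.erase v, A c v' * (x v' - g v')
      = -∑ v' ∈ Finset.univ.erase v, A c v' * (g v' - x v') := by
    rw [← Finset.sum_neg_distrib]
    exact Finset.sum_congr rfl (fun _ _ => by ring)
  set S2 := ∑ v' ∈ Finset.univ.erase v, A c v' * (g v' - x v') with hS2def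
  have hinner : x v + (∑ v' ∈ Finset.univ.erase v, A c v' * (x v' - g v')) / A c v
      = x v - S2 / A c v := by rw [hSeq]; ring
  rw [hinner]
  have hle : x v - S2 / A c v ≤ x v := by
    have : 0 ≤ S2 / A c v := div_nonneg hS2 hpos.le
    linarith
  have hcond : S2 = 0 ↔ ∀ v', v' ≠ v → A c v' ≠ 0 → g v' = x v' := by
    rw [hS2def, sum_nn_zero_iff (fun v' _ => hA c v') (fun v' _ => sub_nonneg.mpr (hg v'))]
    constructor
    · intro h v' hne hav
      have := h v' (Finset.mem_erase.mpr ⟨hne, Finset.mem_univ v'⟩) hav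
      linarith [sub_eq_zero.mp this]
    · intro h v' hv' hav
      have hne := (Finset.mem_erase.mp hv').1
      rw [h v' hne hav]; ring
  refine ⟨max_le (hx v) hle, fun hxv => ?_⟩
  constructor
  · intro h
    have h' : x v - S2 / A c v = x v := by
      rcases max_cases 0 (x v - S2 / A c v) with ⟨h1, h2⟩ | ⟨h1, h2⟩
      · rw [h1] at h; linarith
      · rw [← h1, h]
    have : S2 / A c v = 0 := by linarith
    rcases div_eq_zero_iff.mp this with h'' | h''
    · exact hcond.mp h''
    · exact absurd h'' hc
  · intro h
    have : S2 = 0 := hcond.mpr h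
    rw [this, zero_div, sub_zero, max_eq_right (hx v)]

/-- Basic invariants of the IPA: `0 ≤ μ^{(ℓ)}_v ≤ x_v ≤ M^{(ℓ)}_v`. -/
private lemma ipa_bounds {C V : Type*} [Fintype C] [Fintype V]
    (A : C → V → ℝ) (hA : MatNonneg A) (hcol : NoZeroCol A)
    (x : V → ℝ) (hx : ∀ v, 0 ≤ x v) (y : C → ℝ) (hy : ∀ c, y c = ∑ v, A c v * x v) :
    ∀ ℓ v, 0 ≤ (ipa A y ℓ).1 v ∧ (ipa A y ℓ).1 v ≤ x v ∧ x v ≤ (ipa A y ℓ).2 v := by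
  intro ℓ
  induction ℓ with
  | zero =>
    intro v
    refine ⟨le_refl 0, hx v, ?_⟩
    show x v ≤ sInf {r : ℝ | ∃ c, A c v ≠ 0 ∧ r = y c / A c v}
    refine le_csInf (setNonempty _ (hcol v)) ?_
    rintro r ⟨c, hc, rfl⟩
    have := (M_edge A hA x y hy (fun _ => 0) (fun v' => hx v') c v hc).1
    simpa using this
  | succ ℓ ih =>
    intro v
    obtain ⟨c₀, hc₀⟩ := hcol v
    refine ⟨?_, ?_, ?_⟩
    · show (0:ℝ) ≤ sSup _
      exact zero_le_sSup (hcol v) (fun c hc => le_max_left 0 _)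
    · show sSup _ ≤ x v
      refine csSup_le (setNonempty _ (hcol v)) ?_
      rintro r ⟨c, hc, rfl⟩
      exact (mu_edge A hA x hx y hy _ (fun v' => (ih v').2.2) c v hc).1
    · show x v ≤ sInf _
      refine le_csInf (setNonempty _ (hcol v)) ?_
      rintro r ⟨c, hc, rfl⟩
      exact (M_edge A hA x y hy _ (fun v' => (ih v').2.1) c v hc).1

end Helpers

/-- the IPA behaves identically on `(y, A)` and on the binary
problem `(s, B)`, where `B` is the support pattern of `A` and `z` the binary
vector with the same support as `x`: at every iteration the sets of positions
where the lower (resp. upper) bound equals the true value coincide. -/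
theorem ipa_binary_reduction {m n : ℕ} (A B : Fin m → Fin n → ℝ)
    (hA : MatNonneg A) (hcol : NoZeroCol A)
    (hB : ∀ c v, B c v = if A c v = 0 then 0 else 1)
    (x z : Fin n → ℝ) (hx : ∀ v, 0 ≤ x v) (hz : ∀ v, z v = 0 ∨ z v = 1)
    (hsupp : ∀ v, x v ≠ 0 ↔ z v ≠ 0)
    (y s : Fin m → ℝ)
    (hy : ∀ c, y c = ∑ v, A c v * x v) (hs : ∀ c, s c = ∑ v, B c v * z v) :
    ∀ (ℓ : ℕ) (v : Fin n),
      (ipaMu A y ℓ v = x v ↔ ipaMu B s ℓ v = z v) ∧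
      (ipaM A y ℓ v = x v ↔ ipaM B s ℓ v = z v) := by
  have hB0 : MatNonneg B := by
    intro c v; rw [hB]; split <;> norm_num
  have hBA : ∀ c v, (B c v ≠ 0 ↔ A c v ≠ 0) := by
    intro c v; rw [hB]; split <;> simp_all
  have hcolB : NoZeroCol B := fun v => by
    obtain ⟨c, hc⟩ := hcol v; exact ⟨c, (hBA c v).mpr hc⟩
  have hz0 : ∀ v, 0 ≤ z v := fun v => by rcases hz v with h | h <;> rw [h] <;> norm_num
  have hxz : ∀ v, (x v = 0 ↔ z v = 0) := fun v => not_iff_not.mp (hsupp v)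
  have bA := ipa_bounds A hA hcol x hx y hy
  have bB := ipa_bounds B hB0 hcolB z hz0 s hs
  intro ℓ
  induction ℓ with
  | zero =>
    intro v
    constructor
    · show ((0:ℝ) = x v ↔ (0:ℝ) = z v)
      rw [eq_comm, eq_comm (a := (0:ℝ)), hxz v]
    · show (sInf _ = x v ↔ sInf _ = z v)
      have M0A : ∀ c, A c v ≠ 0 → (x v ≤ y c / A c v ∧
          (y c / A c v = x v ↔ ∀ v', v' ≠ v → A c v' ≠ 0 → x v' = 0)) := by
        intro c hc
        have h := M_edge A hA x y hy (fun _ => 0) (fun v' => hx v') c v hc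
        simp only [mul_zero, Finset.sum_const_zero, sub_zero] at h
        refine ⟨h.1, h.2.trans ?_⟩
        constructor <;> intro hh v' a b <;> exact (hh v' a b).symm
      have M0B : ∀ c, B c v ≠ 0 → (z v ≤ s c / B c v ∧
          (s c / B c v = z v ↔ ∀ v', v' ≠ v → B c v' ≠ 0 → z v' = 0)) := by
        intro c hc
        have h := M_edge B hB0 z s hs (fun _ => 0) (fun v' => hz0 v') c v hc
        simp only [mul_zero, Finset.sum_const_zero, sub_zero] at h
        refine ⟨h.1, h.2.trans ?_⟩
        constructor <;> intro hh v' a b <;> exact (hh v' a b).symm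
      rw [sInf_eq_val _ (hcol v) (fun c hc => (M0A c hc).1),
          sInf_eq_val _ (hcolB v) (fun c hc => (M0B c hc).1)]
      refine exists_congr fun c => ?_
      constructor
      · rintro ⟨hc, heq⟩
        refine ⟨(hBA c v).mpr hc, ?_⟩
        rw [(M0B c ((hBA c v).mpr hc)).2]
        intro v' hne hbv'
        exact (hxz v').mp ((M0A c hc).2.mp heq v' hne ((hBA c v').mp hbv'))
      · rintro ⟨hc, heq⟩
        have hc' := (hBA c v).mp hc
        refine ⟨hc', ?_⟩
        rw [(M0A c hc').2]
        intro v' hne hav'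
        exact (hxz v').mpr ((M0B c hc).2.mp heq v' hne ((hBA c v').mpr hav'))
  | succ ℓ ih =>
    intro v
    constructor
    · -- lower bounds
      by_cases hxv : x v = 0
      · have hzv : z v = 0 := (hxz v).mp hxv
        have h1 : ipaMu A y (ℓ + 1) v = x v :=
          le_antisymm ((bA (ℓ+1) v).2.1) (hxv ▸ (bA (ℓ+1) v).1)
        have h2 : ipaMu B s (ℓ + 1) v = z v :=
          le_antisymm ((bB (ℓ+1) v).2.1) (hzv ▸ (bB (ℓ+1) v).1)
        simp [h1, h2]
      · have hxv' : 0 < x v := lt_of_le_of_ne (hx v) (Ne.symm hxv)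
        have hzv : z v = 1 := by
          rcases hz v with h | h
          · exact absurd h (fun h => hxv ((hxz v).mpr h))
          · exact h
        have hzv' : 0 < z v := by rw [hzv]; norm_num
        show (sSup _ = x v ↔ sSup _ = z v)
        rw [sSup_eq_val _ (hcol v) (fun c hc =>
              (mu_edge A hA x hx y hy _ (fun v' => (bA ℓ v').2.2) c v hc).1),
            sSup_eq_val _ (hcolB v) (fun c hc =>
              (mu_edge B hB0 z hz0 s hs _ (fun v' => (bB ℓ v').2.2) c v hc).1)]
        refine exists_congr fun c => ?_
        constructor
        · rintro ⟨hc, heq⟩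
          refine ⟨(hBA c v).mpr hc, ?_⟩
          rw [(mu_edge B hB0 z hz0 s hs _ (fun v' => (bB ℓ v').2.2) c v
              ((hBA c v).mpr hc)).2 hzv']
          have hcond := ((mu_edge A hA x hx y hy _ (fun v' => (bA ℓ v').2.2) c v hc).2
            hxv').mp heq
          intro v' hne hbv'
          exact (ih v').2.mp (hcond v' hne ((hBA c v').mp hbv'))
        · rintro ⟨hc, heq⟩
          have hc' := (hBA c v).mp hc
          refine ⟨hc', ?_⟩
          rw [(mu_edge A hA x hx y hy _ (fun v' => (bA ℓ v').2.2) c v hc').2 hxv']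
          have hcond := ((mu_edge B hB0 z hz0 s hs _ (fun v' => (bB ℓ v').2.2) c v hc).2
            hzv').mp heq
          intro v' hne hav'
          exact (ih v').2.mpr (hcond v' hne ((hBA c v').mpr hav'))
    · -- upper bounds
      show (sInf _ = x v ↔ sInf _ = z v)
      rw [sInf_eq_val _ (hcol v) (fun c hc =>
            (M_edge A hA x y hy _ (fun v' => (bA ℓ v').2.1) c v hc).1),
          sInf_eq_val _ (hcolB v) (fun c hc =>
            (M_edge B hB0 z s hs _ (fun v' => (bB ℓ v').2.1) c v hc).1)]
      refine exists_congr fun c => ?_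
      constructor
      · rintro ⟨hc, heq⟩
        refine ⟨(hBA c v).mpr hc, ?_⟩
        rw [(M_edge B hB0 z s hs _ (fun v' => (bB ℓ v').2.1) c v ((hBA c v).mpr hc)).2]
        have hcond := (M_edge A hA x y hy _ (fun v' => (bA ℓ v').2.1) c v hc).2.mp heq
        intro v' hne hbv'
        exact (ih v').1.mp (hcond v' hne ((hBA c v').mp hbv'))
      · rintro ⟨hc, heq⟩
        have hc' := (hBA c v).mp hc
        refine ⟨hc', ?_⟩
        rw [(M_edge A hA x y hy _ (fun v' => (bA ℓ v').2.1) c v hc').2]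
        have hcond := (M_edge B hB0 z s hs _ (fun v' => (bB ℓ v').2.1) c v hc).2.mp heq
        intro v' hne hav'
        exact (ih v').1.mpr (hcond v' hne ((hBA c v').mpr hav'))
end

section
/- Let A = (a_{cv}) be an m×n real matrix with nonnegative entries and no all-zero column, let x ∈ ℝ^n_{≥0}, and let y = Ax. For every iteration ℓ ≥ 1 and every variable node v with x_v > 0: μ^{(ℓ)}_v = x_v if and only if there exists c ∈ N(v) such that M^{(ℓ−1)}_{v'} = x_{v'} for every v' ∈ N(c) with v' ≠ v. -/
open scoped Classical
open Finset

variable {C V : Type*} [Fintype C] [Fintype V]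

section MyAux

variable {C' : Type*} [Fintype C']

private lemma my_set_finite {P : C' → Prop} (f : C' → ℝ) :
    {r : ℝ | ∃ c, P c ∧ r = f c}.Finite :=
  (Set.finite_range f).subset (by rintro r ⟨c, _, rfl⟩; exact ⟨c, rfl⟩)

private lemma my_le_csSup {P : C' → Prop} (f : C' → ℝ) {c : C'} (hc : P c) :
    f c ≤ sSup {r : ℝ | ∃ c, P c ∧ r = f c} :=
  le_csSup (my_set_finite f).bddAbove ⟨c, hc, rfl⟩

private lemma my_csSup_le {P : C' → Prop} (f : C' → ℝ) (hne : ∃ c, P c) {b : ℝ}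
    (hle : ∀ c, P c → f c ≤ b) : sSup {r : ℝ | ∃ c, P c ∧ r = f c} ≤ b := by
  obtain ⟨c₀, hc₀⟩ := hne
  exact csSup_le ⟨f c₀, c₀, hc₀, rfl⟩ (by rintro r ⟨c, hc, rfl⟩; exact hle c hc)

private lemma my_csSup_mem {P : C' → Prop} (f : C' → ℝ) (hne : ∃ c, P c) :
    ∃ c, P c ∧ sSup {r : ℝ | ∃ c, P c ∧ r = f c} = f c := by
  obtain ⟨c₀, hc₀⟩ := hne
  have hS : ({r : ℝ | ∃ c, P c ∧ r = f c}).Nonempty := ⟨f c₀, c₀, hc₀, rfl⟩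
  obtain ⟨c, hc, h⟩ := hS.csSup_mem (my_set_finite f)
  exact ⟨c, hc, h⟩

private lemma my_le_csInf {P : C' → Prop} (f : C' → ℝ) (hne : ∃ c, P c) {b : ℝ}
    (hle : ∀ c, P c → b ≤ f c) : b ≤ sInf {r : ℝ | ∃ c, P c ∧ r = f c} := by
  obtain ⟨c₀, hc₀⟩ := hne
  exact le_csInf ⟨f c₀, c₀, hc₀, rfl⟩ (by rintro r ⟨c, hc, rfl⟩; exact hle c hc)

end MyAux

/-- Instance-agnostic rewriting of a sum over `filter (· ≠ v) univ` to `univ.erase v`. -/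
private lemma my_sum_filter_ne {α M : Type*} [Fintype α] [DecidableEq α] [AddCommMonoid M]
    (v : α) (f : α → M) {inst : DecidablePred fun v' : α => v' ≠ v} :
    ∑ v' ∈ @Finset.filter α (fun v' => v' ≠ v) inst Finset.univ, f v'
      = ∑ v' ∈ Finset.univ.erase v, f v' := by
  apply Finset.sum_congr _ (fun _ _ => rfl)
  ext v'
  simp [Finset.mem_filter, Finset.mem_erase, and_comm]

private lemma ipaMu_succ_eq {C V : Type*} [Fintype C] [Fintype V] [DecidableEq V]
    (A : C → V → ℝ) (y : C → ℝ) (ℓ : ℕ) (v : V) :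
    ipaMu A y (ℓ + 1) v = sSup {r : ℝ | ∃ c, A c v ≠ 0 ∧
        r = max 0 ((y c - ∑ v' ∈ Finset.univ.erase v,
            A c v' * ipaM A y ℓ v') / A c v)} := by
  simp only [ipaMu, ipaM, ipa, my_sum_filter_ne]

private lemma ipaM_succ_eq {C V : Type*} [Fintype C] [Fintype V] [DecidableEq V]
    (A : C → V → ℝ) (y : C → ℝ) (ℓ : ℕ) (v : V) :
    ipaM A y (ℓ + 1) v = sInf {r : ℝ | ∃ c, A c v ≠ 0 ∧
        r = (y c - ∑ v' ∈ Finset.univ.erase v,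
            A c v' * ipaMu A y ℓ v') / A c v} := by
  simp only [ipaMu, ipaM, ipa, my_sum_filter_ne]

/-- Numerator rewriting. -/
private lemma num_eq {m n : ℕ} (A : Fin m → Fin n → ℝ) (x : Fin n → ℝ)
    (y : Fin m → ℝ) (hy : ∀ c, y c = ∑ v, A c v * x v) (c : Fin m) (v : Fin n) (z : Fin n → ℝ) :
    y c - ∑ v' ∈ Finset.univ.erase v, A c v' * z v'
      = A c v * x v - ∑ v' ∈ Finset.univ.erase v, A c v' * (z v' - x v') := by
  rw [hy c, ← Finset.add_sum_erase _ _ (Finset.mem_univ v)]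
  simp only [mul_sub, Finset.sum_sub_distrib]
  ring

private lemma ipa_sandwich {m n : ℕ} (A : Fin m → Fin n → ℝ)
    (hA : MatNonneg A) (hcol : NoZeroCol A)
    (x : Fin n → ℝ) (hx : ∀ v, 0 ≤ x v)
    (y : Fin m → ℝ) (hy : ∀ c, y c = ∑ v, A c v * x v) :
    ∀ ℓ : ℕ, (∀ v, ipaMu A y ℓ v ≤ x v) ∧ (∀ v, x v ≤ ipaM A y ℓ v) := by
  have hpos : ∀ c v, A c v ≠ 0 → 0 < A c v := fun c v h => (hA c v).lt_of_ne (Ne.symm h)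
  intro ℓ
  induction ℓ with
  | zero =>
    constructor
    · intro v; exact hx v
    · intro v
      show x v ≤ sInf _
      exact my_le_csInf _ (hcol v) (fun c hc => by
        rw [le_div_iff₀ (hpos c v hc), mul_comm, hy c]
        exact Finset.single_le_sum (fun i _ => mul_nonneg (hA c i) (hx i)) (Finset.mem_univ v))
  | succ ℓ ih =>
    obtain ⟨ihμ, ihM⟩ := ih
    constructor
    · intro v
      rw [ipaMu_succ_eq]
      refine my_csSup_le _ (hcol v) (fun c hc => ?_)
      refine max_le (hx v) ?_
      rw [num_eq A x y hy, div_le_iff₀ (hpos c v hc), mul_comm (x v), sub_le_self_iff]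
      exact Finset.sum_nonneg fun v' _ => mul_nonneg (hA c v') (sub_nonneg.2 (ihM v'))
    · intro v
      rw [ipaM_succ_eq]
      refine my_le_csInf _ (hcol v) (fun c hc => ?_)
      rw [le_div_iff₀ (hpos c v hc), num_eq A x y hy, mul_comm (x v), le_sub_self_iff]
      exact Finset.sum_nonpos fun v' _ =>
        mul_nonpos_of_nonneg_of_nonpos (hA c v') (sub_nonpos.2 (ihμ v'))

/-- for `ℓ ≥ 1` and `x_v > 0`, the lower bound reaches `x_v` iff
some neighbour `c` has all other neighbours' upper bounds exact at iteration `ℓ-1`. -/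
theorem ipa_lower_exact_iff {m n : ℕ} (A : Fin m → Fin n → ℝ)
    (hA : MatNonneg A) (hcol : NoZeroCol A)
    (x : Fin n → ℝ) (hx : ∀ v, 0 ≤ x v)
    (y : Fin m → ℝ) (hy : ∀ c, y c = ∑ v, A c v * x v) :
    ∀ (ℓ : ℕ) (v : Fin n), 0 < x v →
      (ipaMu A y (ℓ + 1) v = x v ↔
        ∃ c, A c v ≠ 0 ∧ ∀ v', A c v' ≠ 0 → v' ≠ v → ipaM A y ℓ v' = x v') := by
  have hpos : ∀ c v, A c v ≠ 0 → 0 < A c v := fun c v h => (hA c v).lt_of_ne (Ne.symm h)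
  intro ℓ v hxv
  have hM := (ipa_sandwich A hA hcol x hx y hy ℓ).2
  set f : Fin m → ℝ := fun c => max 0 ((y c - ∑ v' ∈ Finset.univ.erase v,
      A c v' * ipaM A y ℓ v') / A c v) with hf
  have hkey : ∀ c, A c v ≠ 0 →
      (f c = x v ↔ ∀ v', A c v' ≠ 0 → v' ≠ v → ipaM A y ℓ v' = x v') := by
    intro c hc
    have hd : ∀ v' ∈ Finset.univ.erase v, 0 ≤ A c v' * (ipaM A y ℓ v' - x v') :=
      fun v' _ => mul_nonneg (hA c v') (sub_nonneg.2 (hM v'))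
    have hdnn := Finset.sum_nonneg hd
    have hnum := num_eq A x y hy c v (ipaM A y ℓ)
    have hfc_eq : f c = max 0 (x v - (∑ v' ∈ Finset.univ.erase v,
        A c v' * (ipaM A y ℓ v' - x v')) / A c v) := by
      rw [hf]
      simp only
      rw [hnum, sub_div, mul_div_cancel_left₀ _ hc]
    constructor
    · intro hfc
      rw [hfc_eq] at hfc
      have hq : 0 ≤ (∑ v' ∈ Finset.univ.erase v, A c v' * (ipaM A y ℓ v' - x v')) / A c v :=
        div_nonneg hdnn (hpos c v hc).le
      have ht : (∑ v' ∈ Finset.univ.erase v, A c v' * (ipaM A y ℓ v' - x v')) / A c v = 0 := by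
        rcases max_cases 0 (x v - (∑ v' ∈ Finset.univ.erase v,
            A c v' * (ipaM A y ℓ v' - x v')) / A c v) with ⟨h1, _⟩ | ⟨h1, _⟩ <;>
          rw [h1] at hfc <;> linarith
      have hsum0 : ∑ v' ∈ Finset.univ.erase v, A c v' * (ipaM A y ℓ v' - x v') = 0 := by
        have := (div_eq_zero_iff.1 ht)
        rcases this with h | h
        · exact h
        · exact absurd h hc
      intro v' hv' hne
      have hmem : v' ∈ Finset.univ.erase v := Finset.mem_erase.2 ⟨hne, Finset.mem_univ v'⟩
      have h0 := (Finset.sum_eq_zero_iff_of_nonneg hd).1 hsum0 v' hmem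
      rcases mul_eq_zero.1 h0 with h | h
      · exact absurd h hv'
      · linarith [sub_eq_zero.1 h]
    · intro hall
      have hsum0 : ∑ v' ∈ Finset.univ.erase v, A c v' * (ipaM A y ℓ v' - x v') = 0 := by
        refine Finset.sum_eq_zero fun v' hv' => ?_
        rcases eq_or_ne (A c v') 0 with h | h
        · rw [h]; ring
        · rw [hall v' h (Finset.mem_erase.1 hv').1, sub_self, mul_zero]
      rw [hfc_eq, hsum0, zero_div, sub_zero]
      exact max_eq_right hxv.le
  rw [ipaMu_succ_eq]
  constructor
  · intro hsup
    obtain ⟨c, hc, hceq⟩ := my_csSup_mem f (hcol v)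
    exact ⟨c, hc, (hkey c hc).1 (hceq ▸ hsup)⟩
  · rintro ⟨c, hc, hall⟩
    have hfc : f c = x v := (hkey c hc).2 hall
    have h1 : x v ≤ sSup {r : ℝ | ∃ c, A c v ≠ 0 ∧ r = f c} := hfc ▸ my_le_csSup f hc
    have h2 : sSup {r : ℝ | ∃ c, A c v ≠ 0 ∧ r = f c} ≤ x v := by
      refine my_csSup_le f (hcol v) (fun c' hc' => ?_)
      refine max_le hxv.le ?_
      rw [num_eq A x y hy, div_le_iff₀ (hpos c' v hc'), mul_comm (x v), sub_le_self_iff]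
      exact Finset.sum_nonneg fun v' _ => mul_nonneg (hA c' v') (sub_nonneg.2 (hM v'))
    exact le_antisymm h2 h1
end

section
/- Let A ∈ {0,1}^{m×n} be a binary measurement matrix with no all-zero column. A subset T of the variable nodes V is a termatiko set of A if and only if T satisfies the termatiko condition, i.e., with N = N(T) and S = {v ∈ V∖T : N(v) ⊆ N}, for every c ∈ N either (i) N(c) ∩ S ≠ ∅, or (ii) |{v ∈ N_T(c) : every c' ∈ N(v) satisfies |N_T(c')| ≥ 2}| ≥ 2. -/
open scoped Classical
open Finset

variable {C V : Type*} [Fintype C] [Fintype V]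

section MyAux

lemma my_hone {A : C → V → ℝ} (hbin : Binary A) {c : C} {v : V} (h : A c v ≠ 0) : A c v = 1 :=
  (hbin c v).resolve_left h

lemma my_set_eq (A : C → V → ℝ) (v : V) (f : C → ℝ) :
    {r : ℝ | ∃ c, A c v ≠ 0 ∧ r = f c} = ↑((Nv A v).image f) := by
  ext r
  simp only [Set.mem_setOf_eq, Finset.coe_image, Set.mem_image, Finset.mem_coe, Nv,
    Finset.mem_filter, Finset.mem_univ, true_and]
  constructor
  · rintro ⟨c, hc, rfl⟩; exact ⟨c, hc, rfl⟩
  · rintro ⟨c, hc, rfl⟩; exact ⟨c, hc, rfl⟩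

lemma my_set_finite_s5 (A : C → V → ℝ) (v : V) (f : C → ℝ) :
    {r : ℝ | ∃ c, A c v ≠ 0 ∧ r = f c}.Finite := by
  rw [my_set_eq]; exact Finset.finite_toSet _

lemma my_set_nonempty {A : C → V → ℝ} (hcol : NoZeroCol A) (v : V) (f : C → ℝ) :
    {r : ℝ | ∃ c, A c v ≠ 0 ∧ r = f c}.Nonempty := by
  obtain ⟨c, hc⟩ := hcol v
  exact ⟨f c, c, hc, rfl⟩

/-- `M^{(0)}_v` as an explicit quantity. -/
noncomputable def mval (A : C → V → ℝ) (T : Finset V) (v : V) : ℝ :=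
  sInf {r : ℝ | ∃ c, A c v ≠ 0 ∧ r = measT A T c}

lemma mval_le (A : C → V → ℝ) (T : Finset V) {c : C} {v : V} (h : A c v ≠ 0) :
    mval A T v ≤ measT A T c :=
  csInf_le (my_set_finite_s5 A v _).bddBelow ⟨c, h, rfl⟩

lemma mval_mem {A : C → V → ℝ} (hcol : NoZeroCol A) (T : Finset V) (v : V) :
    ∃ c, A c v ≠ 0 ∧ mval A T v = measT A T c :=
  (my_set_nonempty hcol v _).csInf_mem (my_set_finite_s5 A v _)

lemma le_mval {A : C → V → ℝ} (hcol : NoZeroCol A) (T : Finset V) (v : V) {b : ℝ}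
    (hb : ∀ c, A c v ≠ 0 → b ≤ measT A T c) : b ≤ mval A T v :=
  le_csInf (my_set_nonempty hcol v _) (by rintro r ⟨c, hc, rfl⟩; exact hb c hc)

lemma measT_eq_card {A : C → V → ℝ} (hbin : Binary A) (T : Finset V) (c : C) :
    measT A T c = ((NTc A T c).card : ℝ) := by
  rw [NTc, Finset.card_filter]
  push_cast
  unfold measT indVec
  rw [show (∑ v, A c v * if v ∈ T then (1:ℝ) else 0)
      = ∑ v ∈ Finset.univ, if v ∈ T then A c v else 0 by
    refine Finset.sum_congr rfl fun v _ => ?_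
    split <;> simp]
  rw [Finset.sum_ite_mem, Finset.univ_inter]
  refine Finset.sum_congr rfl fun v _ => ?_
  rcases hbin c v with h | h <;> simp [h]

lemma mval_nonneg {A : C → V → ℝ} (hbin : Binary A) (hcol : NoZeroCol A) (T : Finset V)
    (v : V) : 0 ≤ mval A T v := by
  refine le_mval hcol T v fun c hc => ?_
  rw [measT_eq_card hbin]
  positivity

/-- The key intermediate condition `P`. -/
def Pcond (A : C → V → ℝ) (T : Finset V) : Prop :=
  ∀ c v, A c v ≠ 0 → measT A T c ≤
    ∑ v' ∈ Finset.univ.filter (fun v' => v' ≠ v), A c v' * mval A T v'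

lemma ipaM_zero {A : C → V → ℝ} (hbin : Binary A) (T : Finset V) (v : V) :
    (ipa A (measT A T) 0).2 v = mval A T v := by
  show sInf _ = mval A T v
  unfold mval
  congr 1
  ext r
  constructor
  · rintro ⟨c, hc, rfl⟩; exact ⟨c, hc, by rw [my_hone hbin hc, div_one]⟩
  · rintro ⟨c, hc, rfl⟩; exact ⟨c, hc, by rw [my_hone hbin hc, div_one]⟩

lemma ipa_of_P {A : C → V → ℝ} (hbin : Binary A) (hcol : NoZeroCol A) (T : Finset V)
    (hP : Pcond A T) (ℓ : ℕ) :
    (∀ v, (ipa A (measT A T) ℓ).1 v = 0) ∧ (∀ v, (ipa A (measT A T) ℓ).2 v = mval A T v) := by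
  induction ℓ with
  | zero => exact ⟨fun v => rfl, fun v => ipaM_zero hbin T v⟩
  | succ ℓ ih =>
    obtain ⟨ihμ, ihM⟩ := ih
    constructor
    · intro v
      show sSup _ = 0
      have hset : {r : ℝ | ∃ c, A c v ≠ 0 ∧
          r = max 0 ((measT A T c - ∑ v' ∈ Finset.univ.filter (fun v' => v' ≠ v),
            A c v' * (ipa A (measT A T) ℓ).2 v') / A c v)} = {0} := by
        apply Set.eq_singleton_iff_nonempty_unique_mem.mpr
        refine ⟨my_set_nonempty hcol v _, ?_⟩
        rintro r ⟨c, hc, rfl⟩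
        rw [my_hone hbin hc, div_one]
        have hs : (∑ v' ∈ Finset.univ.filter (fun v' => v' ≠ v),
            A c v' * (ipa A (measT A T) ℓ).2 v')
            = ∑ v' ∈ Finset.univ.filter (fun v' => v' ≠ v), A c v' * mval A T v' :=
          Finset.sum_congr rfl fun v' _ => by rw [ihM v']
        rw [hs]
        have := hP c v hc
        exact max_eq_left (by linarith)
      rw [hset, csSup_singleton]
    · intro v
      show sInf _ = mval A T v
      unfold mval
      congr 1
      ext r
      have hsum : ∀ c, (∑ v' ∈ Finset.univ.filter (fun v' => v' ≠ v),
          A c v' * (ipa A (measT A T) ℓ).1 v') = 0 :=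
        fun c => Finset.sum_eq_zero fun v' _ => by rw [ihμ v', mul_zero]
      constructor
      · rintro ⟨c, hc, rfl⟩
        exact ⟨c, hc, by rw [hsum, sub_zero, my_hone hbin hc, div_one]⟩
      · rintro ⟨c, hc, rfl⟩
        exact ⟨c, hc, by rw [hsum, sub_zero, my_hone hbin hc, div_one]⟩

lemma termatiko_iff_P {A : C → V → ℝ} (hbin : Binary A) (hcol : NoZeroCol A) (T : Finset V) :
    IsTermatiko A T ↔ Pcond A T := by
  constructor
  · intro h
    intro c v hc
    by_contra hlt
    push_neg at hlt
    have h1 : ipaMu A (measT A T) 1 v = 0 := h 1 v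
    have hmem : max 0 ((measT A T c - ∑ v' ∈ Finset.univ.filter (fun v' => v' ≠ v),
        A c v' * (ipa A (measT A T) 0).2 v') / A c v) ∈
        {r : ℝ | ∃ c', A c' v ≠ 0 ∧
          r = max 0 ((measT A T c' - ∑ v' ∈ Finset.univ.filter (fun v' => v' ≠ v),
            A c' v' * (ipa A (measT A T) 0).2 v') / A c' v)} := ⟨c, hc, rfl⟩
    have hle : max 0 ((measT A T c - ∑ v' ∈ Finset.univ.filter (fun v' => v' ≠ v),
        A c v' * (ipa A (measT A T) 0).2 v') / A c v) ≤ ipaMu A (measT A T) 1 v :=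
      le_csSup (my_set_finite_s5 A v _).bddAbove hmem
    rw [h1] at hle
    have hs : (∑ v' ∈ Finset.univ.filter (fun v' => v' ≠ v),
        A c v' * (ipa A (measT A T) 0).2 v')
        = ∑ v' ∈ Finset.univ.filter (fun v' => v' ≠ v), A c v' * mval A T v' :=
      Finset.sum_congr rfl fun v' _ => by rw [ipaM_zero hbin T v']
    rw [hs, my_hone hbin hc, div_one] at hle
    have : (0:ℝ) < max 0 (measT A T c - ∑ v' ∈ Finset.univ.filter (fun v' => v' ≠ v),
        A c v' * mval A T v') := lt_max_of_lt_right (by linarith)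
    linarith
  · intro hP ℓ v
    exact (ipa_of_P hbin hcol T hP ℓ).1 v

end MyAux

section MyAux2
set_option linter.unusedSectionVars false

lemma one_le_mval_of_T {A : C → V → ℝ} (hbin : Binary A) (hcol : NoZeroCol A) (T : Finset V)
    {v : V} (hv : v ∈ T) : 1 ≤ mval A T v := by
  refine le_mval hcol T v fun c hc => ?_
  rw [measT_eq_card hbin]
  have : v ∈ NTc A T c := Finset.mem_filter.mpr ⟨hv, hc⟩
  exact_mod_cast Finset.card_pos.mpr ⟨v, this⟩

lemma one_le_mval_of_S {A : C → V → ℝ} (hbin : Binary A) (hcol : NoZeroCol A) (T : Finset V)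
    {v : V} (hv : v ∈ Sset A T) : 1 ≤ mval A T v := by
  obtain ⟨-, -, hall⟩ := Finset.mem_filter.mp hv
  refine le_mval hcol T v fun c hc => ?_
  rw [measT_eq_card hbin]
  obtain ⟨w, hw, hwA⟩ := (Finset.mem_filter.mp (hall c hc)).2
  exact_mod_cast Finset.card_pos.mpr ⟨w, Finset.mem_filter.mpr ⟨hw, hwA⟩⟩

lemma two_le_mval {A : C → V → ℝ} (hbin : Binary A) (hcol : NoZeroCol A) (T : Finset V)
    {v : V} (h : ∀ c', A c' v ≠ 0 → 2 ≤ (NTc A T c').card) : 2 ≤ mval A T v := by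
  refine le_mval hcol T v fun c hc => ?_
  rw [measT_eq_card hbin]
  exact_mod_cast h c hc

lemma mval_eq_zero {A : C → V → ℝ} (hbin : Binary A) (hcol : NoZeroCol A) (T : Finset V)
    {v : V} (hvT : v ∉ T) (hvS : v ∉ Sset A T) : mval A T v = 0 := by
  refine le_antisymm ?_ (mval_nonneg hbin hcol T v)
  have : ∃ c, A c v ≠ 0 ∧ c ∉ NT A T := by
    by_contra hcon
    push_neg at hcon
    exact hvS (Finset.mem_filter.mpr ⟨Finset.mem_univ v, hvT, hcon⟩)
  obtain ⟨c, hc, hcN⟩ := this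
  have hNTc : NTc A T c = ∅ := by
    rw [NTc, Finset.filter_eq_empty_iff]
    intro w hw hwA
    exact hcN (Finset.mem_filter.mpr ⟨Finset.mem_univ c, w, hw, hwA⟩)
  have := mval_le A T hc
  rw [measT_eq_card hbin, hNTc] at this
  simpa using this

lemma cond_to_P {A : C → V → ℝ} (hbin : Binary A) (hcol : NoZeroCol A) (T : Finset V)
    (hcond : TermatikoCond A T) : Pcond A T := by
  intro c v hc
  have hterm_nonneg : ∀ v' ∈ Finset.univ.filter (fun v' => v' ≠ v),
      0 ≤ A c v' * mval A T v' := by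
    intro v' _
    have h0 : 0 ≤ A c v' := by rcases hbin c v' with h | h <;> simp [h]
    exact mul_nonneg h0 (mval_nonneg hbin hcol T v')
  by_cases hcN : c ∈ NT A T
  · rcases hcond c hcN with ⟨v0, hv0S, hv0⟩ | hk
    · -- case (i): a neighbour in S
      set F := (insert v0 (NTc A T c)).erase v with hF
      have hFsub : F ⊆ Finset.univ.filter (fun v' => v' ≠ v) := by
        intro x hx
        simp only [Finset.mem_filter, Finset.mem_univ, true_and]
        exact (Finset.mem_erase.mp hx).1
      have hv0T : v0 ∉ T := (Finset.mem_filter.mp hv0S).2.1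
      have hv0n : v0 ∉ NTc A T c := fun h => hv0T (Finset.mem_filter.mp h).1
      have hcard : (NTc A T c).card ≤ F.card := by
        have h1 : (insert v0 (NTc A T c)).card = (NTc A T c).card + 1 :=
          Finset.card_insert_of_notMem hv0n
        have h2 : (insert v0 (NTc A T c)).card - 1 ≤ F.card :=
          Finset.pred_card_le_card_erase
        omega
      have hone_le : ∀ x ∈ F, (1:ℝ) ≤ A c x * mval A T x := by
        intro x hx
        have hx' := (Finset.mem_erase.mp hx).2
        rcases Finset.mem_insert.mp hx' with rfl | hxN
        · rw [my_hone hbin hv0, one_mul]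
          exact one_le_mval_of_S hbin hcol T hv0S
        · have hxT : x ∈ T := (Finset.mem_filter.mp hxN).1
          have hxA : A c x ≠ 0 := (Finset.mem_filter.mp hxN).2
          rw [my_hone hbin hxA, one_mul]
          exact one_le_mval_of_T hbin hcol T hxT
      calc measT A T c = ((NTc A T c).card : ℝ) := measT_eq_card hbin T c
        _ ≤ (F.card : ℝ) := by exact_mod_cast hcard
        _ = ∑ x ∈ F, (1:ℝ) := by simp
        _ ≤ ∑ x ∈ F, A c x * mval A T x := Finset.sum_le_sum hone_le
        _ ≤ ∑ v' ∈ Finset.univ.filter (fun v' => v' ≠ v), A c v' * mval A T v' :=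
          Finset.sum_le_sum_of_subset_of_nonneg hFsub fun x hx _ => hterm_nonneg x hx
    · -- case (ii): two deeply-connected neighbours in T
      obtain ⟨w, hwK, hwv⟩ := Finset.exists_mem_ne (by omega : 1 <
        ((NTc A T c).filter fun x => ∀ c', A c' x ≠ 0 → 2 ≤ (NTc A T c').card).card) v
      have hwN : w ∈ NTc A T c := (Finset.mem_filter.mp hwK).1
      have hwall : ∀ c', A c' w ≠ 0 → 2 ≤ (NTc A T c').card := (Finset.mem_filter.mp hwK).2
      set F := (NTc A T c).erase v with hF
      have hwF : w ∈ F := Finset.mem_erase.mpr ⟨hwv, hwN⟩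
      have hFsub : F ⊆ Finset.univ.filter (fun v' => v' ≠ v) := by
        intro x hx
        simp only [Finset.mem_filter, Finset.mem_univ, true_and]
        exact (Finset.mem_erase.mp hx).1
      have hcard : (NTc A T c).card ≤ 2 + (F.erase w).card := by
        have h1 : (NTc A T c).card - 1 ≤ F.card := Finset.pred_card_le_card_erase
        have h2 : (F.erase w).card = F.card - 1 := Finset.card_erase_of_mem hwF
        have h3 : 1 ≤ F.card := Finset.card_pos.mpr ⟨w, hwF⟩
        omega
      have hwA : A c w ≠ 0 := (Finset.mem_filter.mp hwN).2
      have hone_le : ∀ x ∈ F.erase w, (1:ℝ) ≤ A c x * mval A T x := by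
        intro x hx
        have hxN : x ∈ NTc A T c := Finset.mem_of_mem_erase (Finset.mem_of_mem_erase hx)
        have hxT : x ∈ T := (Finset.mem_filter.mp hxN).1
        have hxA : A c x ≠ 0 := (Finset.mem_filter.mp hxN).2
        rw [my_hone hbin hxA, one_mul]
        exact one_le_mval_of_T hbin hcol T hxT
      calc measT A T c = ((NTc A T c).card : ℝ) := measT_eq_card hbin T c
        _ ≤ ((2 + (F.erase w).card : ℕ) : ℝ) := by exact_mod_cast hcard
        _ = 2 + ∑ x ∈ F.erase w, (1:ℝ) := by push_cast; simp
        _ ≤ A c w * mval A T w + ∑ x ∈ F.erase w, A c x * mval A T x := by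
            have h2 : (2:ℝ) ≤ A c w * mval A T w := by
              rw [my_hone hbin hwA, one_mul]
              exact two_le_mval hbin hcol T hwall
            exact add_le_add h2 (Finset.sum_le_sum hone_le)
        _ = ∑ x ∈ F, A c x * mval A T x :=
            Finset.add_sum_erase F (fun x => A c x * mval A T x) hwF
        _ ≤ ∑ v' ∈ Finset.univ.filter (fun v' => v' ≠ v), A c v' * mval A T v' :=
          Finset.sum_le_sum_of_subset_of_nonneg hFsub fun x hx _ => hterm_nonneg x hx
  · -- c not in N(T): measurement is zero
    have hNTc : NTc A T c = ∅ := by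
      rw [NTc, Finset.filter_eq_empty_iff]
      intro w hw hwA
      exact hcN (Finset.mem_filter.mpr ⟨Finset.mem_univ c, w, hw, hwA⟩)
    rw [measT_eq_card hbin, hNTc]
    simpa using Finset.sum_nonneg hterm_nonneg

lemma P_to_cond {A : C → V → ℝ} (hbin : Binary A) (hcol : NoZeroCol A) (T : Finset V)
    (hP : Pcond A T) : TermatikoCond A T := by
  intro c hcN
  by_contra hcon
  push_neg at hcon
  obtain ⟨hS, hK⟩ := hcon
  have hNTne : (NTc A T c).Nonempty := by
    obtain ⟨w, hw, hwA⟩ := (Finset.mem_filter.mp hcN).2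
    exact ⟨w, Finset.mem_filter.mpr ⟨hw, hwA⟩⟩
  obtain ⟨v, hvN, hKsub⟩ : ∃ v, v ∈ NTc A T c ∧
      ((NTc A T c).filter fun x => ∀ c', A c' x ≠ 0 → 2 ≤ (NTc A T c').card) ⊆ {v} := by
    rcases ((NTc A T c).filter fun x => ∀ c', A c' x ≠ 0 → 2 ≤ (NTc A T c').card).eq_empty_or_nonempty with he | hne
    · obtain ⟨v, hv⟩ := hNTne
      exact ⟨v, hv, by simp [he]⟩
    · obtain ⟨w, hw⟩ := hne
      refine ⟨w, (Finset.mem_filter.mp hw).1, ?_⟩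
      intro x hx
      simp only [Finset.mem_singleton]
      exact Finset.card_le_one.mp (by omega) x hx w hw
  have hcAv : A c v ≠ 0 := (Finset.mem_filter.mp hvN).2
  have hbound := hP c v hcAv
  have hpt : ∀ v' ∈ Finset.univ.filter (fun v' => v' ≠ v),
      A c v' * mval A T v' ≤ if v' ∈ (NTc A T c).erase v then (1:ℝ) else 0 := by
    intro v' hv'
    have hne : v' ≠ v := (Finset.mem_filter.mp hv').2
    by_cases hA : A c v' = 0
    · rw [hA, zero_mul]; split <;> norm_num
    · by_cases hT : v' ∈ T
      · have hvN' : v' ∈ (NTc A T c).erase v :=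
          Finset.mem_erase.mpr ⟨hne, Finset.mem_filter.mpr ⟨hT, hA⟩⟩
        rw [if_pos hvN', my_hone hbin hA, one_mul]
        have hv'K : v' ∉ ((NTc A T c).filter fun x => ∀ c', A c' x ≠ 0 → 2 ≤ (NTc A T c').card) :=
          fun h => hne (Finset.mem_singleton.mp (hKsub h))
        have hnall : ¬ ∀ c', A c' v' ≠ 0 → 2 ≤ (NTc A T c').card := fun hall =>
          hv'K (Finset.mem_filter.mpr ⟨Finset.mem_filter.mpr ⟨hT, hA⟩, hall⟩)
        push_neg at hnall
        obtain ⟨c', hc', hlt⟩ := hnall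
        have hle := mval_le A T hc'
        rw [measT_eq_card hbin] at hle
        have h1 : (NTc A T c').card ≤ 1 := by omega
        calc mval A T v' ≤ ((NTc A T c').card : ℝ) := hle
          _ ≤ 1 := by exact_mod_cast h1
      · have hv'S : v' ∉ Sset A T := fun h => hA (hS v' h)
        rw [mval_eq_zero hbin hcol T hT hv'S, mul_zero]
        split <;> norm_num
  have hsum := Finset.sum_le_sum hpt
  rw [Finset.sum_ite_mem] at hsum
  have hinter : (Finset.univ.filter (fun v' => v' ≠ v)) ∩ (NTc A T c).erase v
      = (NTc A T c).erase v := by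
    apply Finset.inter_eq_right.mpr
    intro x hx
    simp only [Finset.mem_filter, Finset.mem_univ, true_and]
    exact (Finset.mem_erase.mp hx).1
  rw [hinter, Finset.sum_const, nsmul_eq_mul, mul_one,
    Finset.card_erase_of_mem hvN] at hsum
  have ht1 : 1 ≤ (NTc A T c).card := Finset.card_pos.mpr ⟨v, hvN⟩
  rw [measT_eq_card hbin] at hbound
  have hfin : ((NTc A T c).card : ℝ) ≤ (((NTc A T c).card - 1 : ℕ) : ℝ) :=
    le_trans hbound hsum
  rw [Nat.cast_sub ht1] at hfin
  norm_num at hfin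

end MyAux2

/-- graph-theoretic characterization of termatiko sets:
`T` is a termatiko set of a binary measurement matrix `A` iff it satisfies
the termatiko condition. -/
theorem termatiko_iff_cond {m n : ℕ} (A : Fin m → Fin n → ℝ)
    (hbin : Binary A) (hcol : NoZeroCol A) (T : Finset (Fin n)) :
    IsTermatiko A T ↔ TermatikoCond A T := by
  rw [termatiko_iff_P hbin hcol T]
  exact ⟨P_to_cond hbin hcol T, cond_to_P hbin hcol T⟩
end

section
/- Let A ∈ {0,1}^{m×n} be a binary measurement matrix with no all-zero column and let T ⊆ V satisfy the termatiko condition. Set y = A·1_T, N = N(T), and S = {v ∈ V∖T : N(v) ⊆ N}. Then for every iteration ℓ ≥ 0 of the IPA run on (y, A): (a) μ^{(ℓ)}_v = 0 for every v ∈ V; (b) M^{(ℓ)}_v ≥ 1 for every v ∈ T ∪ S; and (c) every c ∈ N with N(c) ∩ S = ∅ has two distinct neighbors v₁, v₂ ∈ N_T(c) with M^{(ℓ)}_{v₁} ≥ 2 and M^{(ℓ)}_{v₂} ≥ 2. In particular, T is a termatiko set of A. -/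
open scoped Classical
open Finset

variable {C V : Type*} [Fintype C] [Fintype V]

section Aux

variable {A : C → V → ℝ} {T : Finset V}

private lemma sSup_eq_zero' {P : C → Prop} {g : C → ℝ} (hne : ∃ c, P c)
    (h : ∀ c, P c → g c = 0) : sSup {r : ℝ | ∃ c, P c ∧ r = g c} = 0 := by
  obtain ⟨c₀, hc₀⟩ := hne
  have hset : {r : ℝ | ∃ c, P c ∧ r = g c} = {0} := by
    apply Set.eq_singleton_iff_unique_mem.mpr
    exact ⟨⟨c₀, hc₀, (h c₀ hc₀).symm⟩, by rintro r ⟨c, hc, rfl⟩; exact h c hc⟩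
  rw [hset, csSup_singleton]

private lemma sInf_congr' {P : C → Prop} {g h : C → ℝ} (hgh : ∀ c, P c → g c = h c) :
    sInf {r : ℝ | ∃ c, P c ∧ r = g c} = sInf {r : ℝ | ∃ c, P c ∧ r = h c} := by
  congr 1
  ext r
  constructor
  · rintro ⟨c, hc, rfl⟩; exact ⟨c, hc, hgh c hc⟩
  · rintro ⟨c, hc, rfl⟩; exact ⟨c, hc, (hgh c hc).symm⟩

private lemma measT_eq (hbin : Binary A) (c : C) :
    measT A T c = ((NTc A T c).card : ℝ) := by
  have hpt : ∀ v, A c v * indVec T v = if v ∈ NTc A T c then (1 : ℝ) else 0 := by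
    intro v
    rcases hbin c v with h | h <;>
      by_cases hv : v ∈ T <;>
      simp [indVec, NTc, Finset.mem_filter, h, hv]
  simp only [measT, hpt, Finset.sum_ite_mem, Finset.univ_inter, Finset.sum_const,
    nsmul_eq_mul, mul_one]

private lemma one_le_card_NTc {c : C} (hc : c ∈ NT A T) : 1 ≤ (NTc A T c).card := by
  rw [Finset.one_le_card]
  obtain ⟨v, hvT, hvA⟩ := (Finset.mem_filter.mp hc).2
  exact ⟨v, Finset.mem_filter.mpr ⟨hvT, hvA⟩⟩

private lemma ipaM_zero_ge (hbin : Binary A) {y : C → ℝ} {v : V} (hv : ∃ c, A c v ≠ 0)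
    {b : ℝ} (hb : ∀ c, A c v ≠ 0 → b ≤ y c) : b ≤ ipaM A y 0 v := by
  obtain ⟨c₀, hc₀⟩ := hv
  show b ≤ sInf {r : ℝ | ∃ c, A c v ≠ 0 ∧ r = y c / A c v}
  refine le_csInf ⟨y c₀ / A c₀ v, c₀, hc₀, rfl⟩ ?_
  rintro r ⟨c, hc, rfl⟩
  rw [(hbin c v).resolve_left hc, div_one]
  exact hb c hc

private lemma one_le_M0 (hbin : Binary A) (hcol : NoZeroCol A) {v : V}
    (hv : v ∈ T ∨ v ∈ Sset A T) : 1 ≤ ipaM A (measT A T) 0 v := by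
  refine ipaM_zero_ge hbin (hcol v) ?_
  intro c hc
  rw [measT_eq hbin]
  have hcN : c ∈ NT A T := by
    rcases hv with hvT | hvS
    · exact Finset.mem_filter.mpr ⟨Finset.mem_univ _, v, hvT, hc⟩
    · exact (Finset.mem_filter.mp hvS).2.2 c hc
  exact_mod_cast one_le_card_NTc hcN

private lemma two_le_M0 (hbin : Binary A) (hcol : NoZeroCol A) {v : V}
    (hv : ∀ c', A c' v ≠ 0 → 2 ≤ (NTc A T c').card) : 2 ≤ ipaM A (measT A T) 0 v := by
  refine ipaM_zero_ge hbin (hcol v) ?_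
  intro c hc
  rw [measT_eq hbin]
  exact_mod_cast hv c hc

private lemma M0_nonneg (hbin : Binary A) (hcol : NoZeroCol A) (v : V) :
    0 ≤ ipaM A (measT A T) 0 v :=
  ipaM_zero_ge hbin (hcol v) fun c _ => by rw [measT_eq hbin]; positivity

private lemma key_ineq (hbin : Binary A) (hcol : NoZeroCol A) (hT : TermatikoCond A T)
    (v : V) (c : C) :
    measT A T c ≤ ∑ v' ∈ Finset.univ.filter (fun v' => v' ≠ v),
      A c v' * ipaM A (measT A T) 0 v' := by
  have hA : ∀ c' v', 0 ≤ A c' v' := fun c' v' => by rcases hbin c' v' with h | h <;> simp [h]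
  have hnn : ∀ v' : V, 0 ≤ A c v' * ipaM A (measT A T) 0 v' :=
    fun v' => mul_nonneg (hA c v') (M0_nonneg hbin hcol v')
  by_cases hcN : c ∈ NT A T
  swap
  · have hempty : NTc A T c = ∅ := by
      rw [Finset.eq_empty_iff_forall_notMem]
      intro w hw
      rw [NTc, Finset.mem_filter] at hw
      exact hcN (Finset.mem_filter.mpr ⟨Finset.mem_univ _, w, hw.1, hw.2⟩)
    rw [measT_eq hbin, hempty]
    simpa using Finset.sum_nonneg fun w _ => hnn w
  rcases hT c hcN with ⟨s, hsS, hsA⟩ | hF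
  · -- case (i): a neighbour in S
    set G := (insert s (NTc A T c)).erase v with hG
    have hGsub : G ⊆ Finset.univ.filter (fun v' => v' ≠ v) := by
      intro w hw
      simp only [Finset.mem_filter, Finset.mem_univ, true_and]
      exact Finset.ne_of_mem_erase hw
    have hone : ∀ w ∈ G, (1 : ℝ) ≤ A c w * ipaM A (measT A T) 0 w := by
      intro w hw
      have hw' := Finset.mem_of_mem_erase hw
      have hwA : A c w ≠ 0 := by
        rcases Finset.mem_insert.mp hw' with rfl | hwN
        · exact hsA
        · exact (Finset.mem_filter.mp hwN).2
      have hwTS : w ∈ T ∨ w ∈ Sset A T := by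
        rcases Finset.mem_insert.mp hw' with rfl | hwN
        · exact Or.inr hsS
        · exact Or.inl (Finset.mem_filter.mp hwN).1
      rw [(hbin c w).resolve_left hwA, one_mul]
      exact one_le_M0 hbin hcol hwTS
    have hsT : s ∉ T := (Finset.mem_filter.mp hsS).2.1
    have hsN : s ∉ NTc A T c := fun h => hsT (Finset.mem_filter.mp h).1
    have hcard : (NTc A T c).card ≤ G.card := by
      have h1 : (insert s (NTc A T c)).card = (NTc A T c).card + 1 :=
        Finset.card_insert_of_notMem hsN
      have h2 : (insert s (NTc A T c)).card - 1 ≤ G.card :=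
        Finset.pred_card_le_card_erase
      omega
    calc measT A T c = ((NTc A T c).card : ℝ) := measT_eq hbin c
      _ ≤ (G.card : ℝ) := by exact_mod_cast hcard
      _ = ∑ _w ∈ G, (1 : ℝ) := by simp
      _ ≤ ∑ w ∈ G, A c w * ipaM A (measT A T) 0 w := Finset.sum_le_sum hone
      _ ≤ _ := Finset.sum_le_sum_of_subset_of_nonneg hGsub fun w _ _ => hnn w
  · -- case (ii): two well-connected neighbours in T
    set F := (NTc A T c).filter (fun v => ∀ c', A c' v ≠ 0 → 2 ≤ (NTc A T c').card) with hFdef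
    set G := (NTc A T c).erase v with hG
    have hGsub : G ⊆ Finset.univ.filter (fun v' => v' ≠ v) := by
      intro w hw
      simp only [Finset.mem_filter, Finset.mem_univ, true_and]
      exact Finset.ne_of_mem_erase hw
    have hone : ∀ w ∈ G, (1 : ℝ) + (if w ∈ F then 1 else 0)
        ≤ A c w * ipaM A (measT A T) 0 w := by
      intro w hw
      have hwN := Finset.mem_of_mem_erase hw
      have hwA : A c w ≠ 0 := (Finset.mem_filter.mp hwN).2
      rw [(hbin c w).resolve_left hwA, one_mul]
      by_cases hwF : w ∈ F
      · simp only [hwF, if_true]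
        have := two_le_M0 (T := T) hbin hcol (Finset.mem_filter.mp hwF).2
        linarith
      · simp only [hwF, if_false, add_zero]
        exact one_le_M0 hbin hcol (Or.inl (Finset.mem_filter.mp hwN).1)
    have hsplit : ∑ w ∈ G, ((1 : ℝ) + if w ∈ F then 1 else 0)
        = (G.card : ℝ) + ((G ∩ F).card : ℝ) := by
      rw [Finset.sum_add_distrib, Finset.sum_const, Finset.sum_ite_mem, Finset.sum_const]
      simp
    have h1 : (NTc A T c).card - 1 ≤ G.card := Finset.pred_card_le_card_erase
    have h2 : F.card - 1 ≤ (G ∩ F).card := by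
      refine le_trans (Finset.pred_card_le_card_erase (a := v) (s := F)) (Finset.card_le_card ?_)
      intro w hw
      have hwF := Finset.mem_of_mem_erase hw
      have hwN : w ∈ NTc A T c := (Finset.mem_filter.mp hwF).1
      exact Finset.mem_inter.mpr
        ⟨Finset.mem_erase.mpr ⟨Finset.ne_of_mem_erase hw, hwN⟩, hwF⟩
    have h3 : 1 ≤ (NTc A T c).card := one_le_card_NTc hcN
    have hcard : (NTc A T c).card ≤ G.card + (G ∩ F).card := by omega
    calc measT A T c = ((NTc A T c).card : ℝ) := measT_eq hbin c
      _ ≤ ((G.card + (G ∩ F).card : ℕ) : ℝ) := by exact_mod_cast hcard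
      _ = ∑ w ∈ G, ((1 : ℝ) + if w ∈ F then 1 else 0) := by rw [hsplit]; push_cast; ring
      _ ≤ ∑ w ∈ G, A c w * ipaM A (measT A T) 0 w := Finset.sum_le_sum hone
      _ ≤ _ := Finset.sum_le_sum_of_subset_of_nonneg hGsub fun w _ _ => hnn w

private lemma ipa_invariant (hbin : Binary A) (hcol : NoZeroCol A) (hT : TermatikoCond A T) :
    ∀ ℓ : ℕ, (∀ v, ipaMu A (measT A T) ℓ v = 0) ∧
      (∀ v, ipaM A (measT A T) ℓ v = ipaM A (measT A T) 0 v) := by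
  intro ℓ
  induction ℓ with
  | zero => exact ⟨fun _ => rfl, fun _ => rfl⟩
  | succ ℓ ih =>
    have ih2 : ∀ v', (ipa A (measT A T) ℓ).2 v' = ipaM A (measT A T) 0 v' := ih.2
    have ih1 : ∀ v', (ipa A (measT A T) ℓ).1 v' = 0 := ih.1
    constructor
    · intro v
      show sSup {r : ℝ | ∃ c, A c v ≠ 0 ∧
          r = max 0 ((measT A T c - ∑ v' ∈ Finset.univ.filter (fun v' => v' ≠ v),
              A c v' * (ipa A (measT A T) ℓ).2 v') / A c v)} = 0
      refine sSup_eq_zero' (hcol v) ?_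
      intro c hc
      rw [(hbin c v).resolve_left hc, div_one, max_eq_left]
      rw [sub_nonpos]
      calc measT A T c
          ≤ ∑ v' ∈ Finset.univ.filter (fun v' => v' ≠ v),
              A c v' * ipaM A (measT A T) 0 v' := key_ineq hbin hcol hT v c
        _ = _ := Finset.sum_congr rfl fun v' _ => by rw [ih2 v']
    · intro v
      show sInf {r : ℝ | ∃ c, A c v ≠ 0 ∧
          r = (measT A T c - ∑ v' ∈ Finset.univ.filter (fun v' => v' ≠ v),
              A c v' * (ipa A (measT A T) ℓ).1 v') / A c v} = ipaM A (measT A T) 0 v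
      have h0 : ipaM A (measT A T) 0 v
          = sInf {r : ℝ | ∃ c, A c v ≠ 0 ∧ r = measT A T c / A c v} := rfl
      rw [h0]
      apply sInf_congr'
      intro c _
      have hz : ∑ v' ∈ Finset.univ.filter (fun v' => v' ≠ v),
          A c v' * (ipa A (measT A T) ℓ).1 v' = 0 :=
        Finset.sum_eq_zero fun v' _ => by rw [ih1 v', mul_zero]
      rw [hz, sub_zero]

end Aux

/-- if `T` satisfies the termatiko condition, then for the IPA run
on `y = A·1_T`: (a) all lower bounds stay `0`; (b) all upper bounds on `T ∪ S`
stay `≥ 1`; (c) every `c ∈ N(T)` not connected to `S` has two distinct neighbours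
in `T` with upper bound `≥ 2`. In particular `T` is a termatiko set. -/
theorem termatikoCond_implies_invariants {m n : ℕ} (A : Fin m → Fin n → ℝ)
    (hbin : Binary A) (hcol : NoZeroCol A)
    (T : Finset (Fin n)) (hT : TermatikoCond A T) :
    (∀ (ℓ : ℕ) (v : Fin n), ipaMu A (measT A T) ℓ v = 0) ∧
    (∀ (ℓ : ℕ), ∀ v ∈ T ∪ Sset A T, 1 ≤ ipaM A (measT A T) ℓ v) ∧
    (∀ (ℓ : ℕ), ∀ c ∈ NT A T, (∀ v ∈ Sset A T, A c v = 0) →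
      ∃ v₁ ∈ NTc A T c, ∃ v₂ ∈ NTc A T c, v₁ ≠ v₂ ∧
        2 ≤ ipaM A (measT A T) ℓ v₁ ∧ 2 ≤ ipaM A (measT A T) ℓ v₂) ∧
    IsTermatiko A T := by
  have hinv := ipa_invariant hbin hcol hT
  refine ⟨fun ℓ v => (hinv ℓ).1 v, ?_, ?_, fun ℓ v => (hinv ℓ).1 v⟩
  · intro ℓ v hv
    rw [(hinv ℓ).2 v]
    simp only [Finset.mem_union] at hv
    exact one_le_M0 hbin hcol hv
  · intro ℓ c hc hS
    rcases hT c hc with ⟨s, hsS, hsA⟩ | hF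
    · exact absurd (hS s hsS) hsA
    · obtain ⟨v₁, hv₁, v₂, hv₂, hne⟩ := Finset.one_lt_card.mp hF
      simp only [Finset.mem_filter] at hv₁ hv₂
      refine ⟨v₁, hv₁.1, v₂, hv₂.1, hne, ?_, ?_⟩
      · rw [(hinv ℓ).2 v₁]
        exact two_le_M0 hbin hcol hv₁.2
      · rw [(hinv ℓ).2 v₂]
        exact two_le_M0 hbin hcol hv₂.2
end

section
/- Let A be an m×n matrix with Tanner graph on variable nodes V and measurement nodes C, and let T ⊆ V be nonempty and satisfy the termatiko condition. Then T ∪ S is a stopping set, where S = {v ∈ V∖T : N(v) ⊆ N(T)}. In particular, every nonempty set satisfying the termatiko condition (hence every nonempty termatiko set) is contained in a stopping set. -/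
open scoped Classical
open Finset

variable {C V : Type*} [Fintype C] [Fintype V]

/-- if a nonempty `T` satisfies the termatiko condition, then
`T ∪ S` is a stopping set; in particular `T` is contained in a stopping set. -/
theorem termatikoCond_union_stopping {m n : ℕ} (A : Fin m → Fin n → ℝ)
    (T : Finset (Fin n)) (hne : T.Nonempty) (hT : TermatikoCond A T) :
    StoppingSet A (T ∪ Sset A T) ∧
    ∃ U : Finset (Fin n), StoppingSet A U ∧ T ⊆ U := by

  have main : StoppingSet A (T ∪ Sset A T) := by
    intro c hc
    -- c ∈ NT A T
    have hcT : c ∈ NT A T := by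
      simp only [NT, Finset.mem_filter, Finset.mem_univ, true_and, Finset.mem_union] at hc ⊢
      obtain ⟨v, hv, hAv⟩ := hc
      rcases hv with hv | hv
      · exact ⟨v, hv, hAv⟩
      · simp only [Sset, Finset.mem_filter, Finset.mem_univ, true_and] at hv
        have := hv.2 c hAv
        simpa [NT] using this
    obtain ⟨w, hwT, hAw⟩ : ∃ w ∈ T, A c w ≠ 0 := by
      simpa [NT] using hcT
    rcases hT c hcT with ⟨v, hvS, hAv⟩ | h2
    · have hvT : v ∉ T := by
        simp only [Sset, Finset.mem_filter, Finset.mem_univ, true_and] at hvS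
        exact hvS.1
      have hvw : v ≠ w := fun h => hvT (h ▸ hwT)
      have hsub : ({v, w} : Finset (Fin n)) ⊆ NTc A (T ∪ Sset A T) c := by
        intro x hx
        simp only [Finset.mem_insert, Finset.mem_singleton] at hx
        rcases hx with rfl | rfl
        · simp [NTc, Finset.mem_union, hvS, hAv]
        · simp [NTc, Finset.mem_union, hwT, hAw]
      calc 2 = ({v, w} : Finset (Fin n)).card := by rw [Finset.card_insert_of_notMem (by simpa using hvw)]; simp
        _ ≤ _ := Finset.card_le_card hsub
    · refine le_trans h2 (Finset.card_le_card ?_)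
      rw [Finset.subset_iff]
      intro x hx
      have hx' : x ∈ NTc A T c := Finset.mem_of_mem_filter (p := fun v => ∀ c', A c' v ≠ 0 → 2 ≤ (NTc A T c').card) x (by convert hx)
      simp only [NTc, Finset.mem_filter] at hx' ⊢
      exact ⟨Finset.mem_union_left _ hx'.1, hx'.2⟩
  exact ⟨main, ⟨T ∪ Sset A T, main, Finset.subset_union_left⟩⟩
end

section
/- Let A ∈ {0,1}^{m×n} be a binary measurement matrix with no all-zero column, let x ∈ ℝ^n_{≥0} with y = Ax, and let T be a nonempty subset of supp(x) satisfying the termatiko condition. Then for every v ∈ T and every iteration ℓ ≥ 0 of the IPA run on (y, A), μ^{(ℓ)}_v ≠ x_v; i.e., no position of T is ever recovered by the IPA. -/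
open scoped Classical
open Finset

variable {C V : Type*} [Fintype C] [Fintype V]

section IpaHelpers

variable {α : Type*} [Finite α] {p : α → Prop} {f : α → ℝ} {b : ℝ}

lemma ipaSet_finite (p : α → Prop) (f : α → ℝ) :
    {r : ℝ | ∃ c, p c ∧ r = f c}.Finite :=
  (Set.finite_range f).subset (by rintro r ⟨c, _, rfl⟩; exact Set.mem_range_self c)

lemma ipaSet_nonempty (h : ∃ c, p c) : {r : ℝ | ∃ c, p c ∧ r = f c}.Nonempty := by
  obtain ⟨c, hc⟩ := h; exact ⟨f c, c, hc, rfl⟩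

lemma ipa_csSup_le (h : ∃ c, p c) (hb : ∀ c, p c → f c ≤ b) :
    sSup {r : ℝ | ∃ c, p c ∧ r = f c} ≤ b :=
  csSup_le (ipaSet_nonempty h) (by rintro r ⟨c, hc, rfl⟩; exact hb c hc)

lemma ipa_csSup_lt (h : ∃ c, p c) (hb : ∀ c, p c → f c < b) :
    sSup {r : ℝ | ∃ c, p c ∧ r = f c} < b := by
  obtain ⟨c, hc, hr⟩ := (ipaSet_nonempty h).csSup_mem (ipaSet_finite p f)
  rw [hr]; exact hb c hc

lemma ipa_le_csInf (h : ∃ c, p c) (hb : ∀ c, p c → b ≤ f c) :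
    b ≤ sInf {r : ℝ | ∃ c, p c ∧ r = f c} :=
  le_csInf (ipaSet_nonempty h) (by rintro r ⟨c, hc, rfl⟩; exact hb c hc)

lemma ipa_lt_csInf (h : ∃ c, p c) (hb : ∀ c, p c → b < f c) :
    b < sInf {r : ℝ | ∃ c, p c ∧ r = f c} := by
  obtain ⟨c, hc, hr⟩ := (ipaSet_nonempty h).csInf_mem (ipaSet_finite p f)
  rw [hr]; exact hb c hc

end IpaHelpers

section GenericSums

variable {C V : Type*} [Fintype C] [Fintype V]

lemma ipa_sum_split (A : C → V → ℝ) (x : V → ℝ) (c : C) (v : V) :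
    ∑ v', A c v' * x v' =
      A c v * x v + ∑ v' ∈ Finset.univ.filter (fun v' => v' ≠ v), A c v' * x v' := by
  have h : Finset.univ.filter (fun v' => v' ≠ v) = Finset.univ.erase v := by
    ext a; simp [Finset.mem_erase, Finset.mem_filter]
  rw [h, ← Finset.add_sum_erase _ _ (Finset.mem_univ v)]

lemma ipa_sum_le (A : C → V → ℝ) (f g : V → ℝ) (c : C) (v : V)
    (hA : ∀ v', 0 ≤ A c v') (h : ∀ v', f v' ≤ g v') :
    ∑ v' ∈ Finset.univ.filter (fun v' => v' ≠ v), A c v' * f v' ≤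
      ∑ v' ∈ Finset.univ.filter (fun v' => v' ≠ v), A c v' * g v' :=
  Finset.sum_le_sum fun i _ => mul_le_mul_of_nonneg_left (h i) (hA i)

lemma ipa_sum_lt (A : C → V → ℝ) (f g : V → ℝ) (c : C) (v t : V)
    (hA : ∀ v', 0 ≤ A c v') (h : ∀ v', f v' ≤ g v')
    (htv : t ≠ v) (hat : A c t = 1) (hst : f t < g t) :
    ∑ v' ∈ Finset.univ.filter (fun v' => v' ≠ v), A c v' * f v' <
      ∑ v' ∈ Finset.univ.filter (fun v' => v' ≠ v), A c v' * g v' :=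
  Finset.sum_lt_sum (fun i _ => mul_le_mul_of_nonneg_left (h i) (hA i))
    ⟨t, Finset.mem_filter.mpr ⟨Finset.mem_univ t, htv⟩,
      by rw [hat, one_mul, one_mul]; exact hst⟩

lemma ipa_sum_nonneg (A : C → V → ℝ) (x : V → ℝ) (c : C) (v : V)
    (h : ∀ v', 0 ≤ A c v' * x v') :
    0 ≤ ∑ v' ∈ Finset.univ.filter (fun v' => v' ≠ v), A c v' * x v' :=
  Finset.sum_nonneg fun i _ => h i

end GenericSums

/-- if a nonempty `T ⊆ supp(x)` satisfies the termatiko condition,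
then no position of `T` is ever recovered by the IPA run on `(y, A)`. -/
theorem termatiko_subset_never_recovered {m n : ℕ} (A : Fin m → Fin n → ℝ)
    (hbin : Binary A) (hcol : NoZeroCol A)
    (x : Fin n → ℝ) (hx : ∀ v, 0 ≤ x v)
    (y : Fin m → ℝ) (hy : ∀ c, y c = ∑ v, A c v * x v)
    (T : Finset (Fin n)) (hne : T.Nonempty)
    (hsub : ∀ v ∈ T, x v ≠ 0) (hT : TermatikoCond A T) :
    ∀ v ∈ T, ∀ ℓ : ℕ, ipaMu A y ℓ v ≠ x v := by
  have hA0 : ∀ c v, 0 ≤ A c v := fun c v => by rcases hbin c v with h | h <;> simp [h]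
  have hA1 : ∀ c v, A c v ≠ 0 → A c v = 1 := fun c v h => (hbin c v).resolve_left h
  have hxT : ∀ v ∈ T, 0 < x v := fun v hv => lt_of_le_of_ne (hx v) (Ne.symm (hsub v hv))
  set That : Finset (Fin n) :=
    T.filter (fun v => ∀ c', A c' v ≠ 0 → 2 ≤ (NTc A T c').card) with hThatDef
  -- every check adjacent to a node of `That ∪ S` has another neighbour in `T`
  have pick : ∀ v, (v ∈ That ∨ v ∈ Sset A T) → ∀ c, A c v ≠ 0 →
      ∃ t, t ∈ T ∧ t ≠ v ∧ A c t ≠ 0 := by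
    intro v hv c hc
    rcases hv with hv | hv
    · rw [hThatDef, Finset.mem_filter] at hv
      obtain ⟨hvT, hprot⟩ := hv
      have h2 := hprot c hc
      obtain ⟨t, ht, htv⟩ := Finset.exists_mem_ne (lt_of_lt_of_le one_lt_two h2) v
      simp only [NTc, Finset.mem_filter] at ht
      exact ⟨t, ht.1, htv, ht.2⟩
    · simp only [Sset, Finset.mem_filter, Finset.mem_univ, true_and] at hv
      obtain ⟨hvT, hall⟩ := hv
      have hcNT := hall c hc
      simp only [NT, Finset.mem_filter, Finset.mem_univ, true_and] at hcNT
      obtain ⟨t, htT, hct⟩ := hcNT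
      exact ⟨t, htT, fun h => hvT (h ▸ htT), hct⟩
  have key : ∀ ℓ : ℕ,
      (∀ v, ipaMu A y ℓ v ≤ x v ∧ x v ≤ ipaM A y ℓ v) ∧
      (∀ v ∈ T, ipaMu A y ℓ v < x v) ∧
      (∀ v, (v ∈ That ∨ v ∈ Sset A T) → x v < ipaM A y ℓ v) := by
    intro ℓ
    induction ℓ with
    | zero =>
      refine ⟨fun v => ⟨?_, ?_⟩, fun v hv => ?_, fun v hv => ?_⟩
      · simp only [ipaMu, ipa]
        exact hx v
      · simp only [ipaM, ipa]
        refine ipa_le_csInf (hcol v) (fun c hc => ?_)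
        rw [hA1 c v hc, div_one, hy c]
        have h1 := ipa_sum_split A x c v
        have h0 := ipa_sum_nonneg A x c v (fun v' => mul_nonneg (hA0 c v') (hx v'))
        rw [hA1 c v hc, one_mul] at h1
        linarith
      · simp only [ipaMu, ipa]
        exact hxT v hv
      · simp only [ipaM, ipa]
        refine ipa_lt_csInf (hcol v) (fun c hc => ?_)
        obtain ⟨t, htT, htv, hct⟩ := pick v hv c hc
        rw [hA1 c v hc, div_one, hy c]
        have hsum : x v + x t ≤ ∑ v', A c v' * x v' := by
          calc x v + x t = ∑ v' ∈ ({v, t} : Finset (Fin n)), A c v' * x v' := by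
                rw [Finset.sum_pair (Ne.symm htv), hA1 c v hc, hA1 c t hct, one_mul, one_mul]
            _ ≤ _ := Finset.sum_le_sum_of_subset_of_nonneg (Finset.subset_univ _)
                (fun i _ _ => mul_nonneg (hA0 c i) (hx i))
        have := hxT t htT
        linarith
    | succ ℓ ih =>
      obtain ⟨ihR, ihQ, ihP⟩ := ih
      have ihMu : ∀ v', (ipa A y ℓ).1 v' ≤ x v' := fun v' => (ihR v').1
      have ihM : ∀ v', x v' ≤ (ipa A y ℓ).2 v' := fun v' => (ihR v').2
      have ihQ' : ∀ v' ∈ T, (ipa A y ℓ).1 v' < x v' := ihQ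
      have ihP' : ∀ v', (v' ∈ That ∨ v' ∈ Sset A T) → x v' < (ipa A y ℓ).2 v' := ihP
      refine ⟨fun v => ⟨?_, ?_⟩, fun v hv => ?_, fun v hv => ?_⟩
      · simp only [ipaMu, ipa]
        refine ipa_csSup_le (hcol v) (fun c hc => ?_)
        rw [hA1 c v hc, div_one]
        refine max_le (hx v) ?_
        have h1 := ipa_sum_split A x c v
        have h2 := ipa_sum_le A x ((ipa A y ℓ).2) c v (hA0 c) ihM
        rw [hA1 c v hc, one_mul] at h1
        rw [hy c] at *
        linarith
      · simp only [ipaM, ipa]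
        refine ipa_le_csInf (hcol v) (fun c hc => ?_)
        rw [hA1 c v hc, div_one]
        have h1 := ipa_sum_split A x c v
        have h2 := ipa_sum_le A ((ipa A y ℓ).1) x c v (hA0 c) ihMu
        rw [hA1 c v hc, one_mul] at h1
        rw [hy c] at *
        linarith
      · -- strict upper bound on μ for v ∈ T, via the termatiko condition
        simp only [ipaMu, ipa]
        refine ipa_csSup_lt (hcol v) (fun c hc => ?_)
        have hcNT : c ∈ NT A T := by
          simp only [NT, Finset.mem_filter, Finset.mem_univ, true_and]
          exact ⟨v, hv, hc⟩
        have hstrict : ∃ w, w ≠ v ∧ A c w ≠ 0 ∧ x w < (ipa A y ℓ).2 w := by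
          rcases hT c hcNT with ⟨w, hwS, hcw⟩ | h2
          · have hwT : w ∉ T := by
              simp only [Sset, Finset.mem_filter] at hwS
              exact hwS.2.1
            exact ⟨w, fun h => hwT (h ▸ hv), hcw, ihP' w (Or.inr hwS)⟩
          · obtain ⟨t, ht, htv⟩ :=
              Finset.exists_mem_ne (lt_of_lt_of_le one_lt_two h2) v
            have ht : t ∈ (NTc A T c).filter
                (fun v => ∀ c', A c' v ≠ 0 → 2 ≤ (NTc A T c').card) := by convert ht
            rw [Finset.mem_filter, NTc, Finset.mem_filter] at ht
            obtain ⟨⟨htT, hct⟩, hprot⟩ := ht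
            have htThat : t ∈ That := by
              rw [hThatDef, Finset.mem_filter]
              exact ⟨htT, hprot⟩
            exact ⟨t, htv, hct, ihP' t (Or.inl htThat)⟩
        obtain ⟨w, hwv, hcw, hw⟩ := hstrict
        have hlt := ipa_sum_lt A x ((ipa A y ℓ).2) c v w (hA0 c) ihM hwv (hA1 c w hcw) hw
        refine max_lt (hxT v hv) ?_
        rw [hA1 c v hc, div_one]
        have h1 := ipa_sum_split A x c v
        rw [hA1 c v hc, one_mul] at h1
        rw [hy c]
        linarith
      · -- strict lower bound on M for v ∈ That ∪ S
        simp only [ipaM, ipa]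
        refine ipa_lt_csInf (hcol v) (fun c hc => ?_)
        obtain ⟨t, htT, htv, hct⟩ := pick v hv c hc
        have hlt := ipa_sum_lt A ((ipa A y ℓ).1) x c v t (hA0 c) ihMu htv (hA1 c t hct)
          (ihQ' t htT)
        rw [hA1 c v hc, div_one]
        have h1 := ipa_sum_split A x c v
        rw [hA1 c v hc, one_mul] at h1
        rw [hy c]
        linarith
  intro v hv ℓ
  exact ne_of_lt ((key ℓ).2.1 v hv)
end
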